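/- Let d ≥ 3, let e₁ = (1,0,…,0) ∈ ℝ^d, c_k = 2^k e₁, and C_k = Q(c_k, 1/(2k)). Define the potential 𝒱(x) = Σ_{k=2}^∞ k² χ_{C_k}(x). Then 𝒱 satisfies the global Kato condition (S): sup_{x ∈ ℝ^d} ∫_{ℝ^d} 𝒱(y) |x − y|^{2−d} dy < ∞. -/

import Mathlib

open MeasureTheory
open scoped ENNReal

set_option linter.unusedSectionVars false
set_option linter.unusedVariables false
set_option maxHeartbeats 1000000

noncomputable section

/-- `ℝ^d` as a Euclidean space. -/
abbrev Rd (d : ℕ) := EuclideanSpace ℝ (Fin d)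

/-- The open cube `Q(c,r) = {y : max_i |c_i - y_i| < r}`. -/
def cubeSet {d : ℕ} (c : Rd d) (r : ℝ) : Set (Rd d) := {y | ∀ i, |c i - y i| < r}

/-- The first standard basis vector `e₁ = (1,0,…,0)`. -/
def e1 (d : ℕ) [NeZero d] : Rd d := EuclideanSpace.single 0 1

/-- The cube `C_k = Q(2^k e₁, 1/(2k))`. -/
def Ck (d : ℕ) [NeZero d] (k : ℕ) : Set (Rd d) :=
  cubeSet ((2 : ℝ) ^ k • e1 d) (1 / (2 * k))

/-- The potential `𝒱(x) = ∑_{k=2}^∞ k² χ_{C_k}(x)`. -/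
def potV (d : ℕ) [NeZero d] (x : Rd d) : ℝ :=
  ∑' k : ℕ, if 2 ≤ k then ((k : ℝ) ^ 2) * (Ck d k).indicator (fun _ => (1 : ℝ)) x else 0

def CdB (d : ℕ) : ℝ≥0∞ := volume (Metric.ball (0 : Rd d) 1) * 2^d * 2

section Aux
variable {d : ℕ} [NeZero d]

lemma cubeSet_eq (c : Rd d) (r : ℝ) :
    cubeSet c r = (MeasurableEquiv.toLp 2 (Fin d → ℝ)).symm ⁻¹'
      (Set.univ.pi fun i => Set.Ioo (c i - r) (c i + r)) := by
  ext y
  simp only [cubeSet, Set.mem_setOf_eq, Set.mem_preimage, Set.mem_pi, Set.mem_univ,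
    true_implies, Set.mem_Ioo, MeasurableEquiv.coe_toLp_symm]
  refine forall_congr' fun i => ?_
  rw [abs_sub_lt_iff]
  constructor <;> rintro ⟨h1, h2⟩ <;> constructor <;> linarith

lemma measurableSet_cubeSet (c : Rd d) (r : ℝ) : MeasurableSet (cubeSet c r) := by
  rw [cubeSet_eq]
  exact (MeasurableEquiv.toLp 2 (Fin d → ℝ)).symm.measurable
    (MeasurableSet.univ_pi fun i => measurableSet_Ioo)

lemma volume_cubeSet (c : Rd d) {r : ℝ} (hr : 0 ≤ r) :
    volume (cubeSet c r) = ENNReal.ofReal ((2 * r) ^ d) := by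
  rw [cubeSet_eq,
    (EuclideanSpace.volume_preserving_symm_measurableEquiv_toLp (Fin d)).measure_preimage
      (MeasurableSet.univ_pi fun i => measurableSet_Ioo).nullMeasurableSet,
    volume_pi_pi]
  calc (∏ i : Fin d, volume (Set.Ioo (c i - r) (c i + r)))
      = ∏ _i : Fin d, ENNReal.ofReal (2 * r) := by
        refine Finset.prod_congr rfl fun i _ => ?_
        rw [Real.volume_Ioo]; congr 1; ring
    _ = ENNReal.ofReal (2 * r) ^ d := by simp [Finset.prod_const]
    _ = ENNReal.ofReal ((2 * r) ^ d) := (ENNReal.ofReal_pow (by linarith) d).symm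

lemma norm_sub_le_of_mem_cube {c : Rd d} {r : ℝ} {y : Rd d}
    (hy : y ∈ cubeSet c r) (hr : 0 ≤ r) : ‖c - y‖ ≤ Real.sqrt d * r := by
  rw [EuclideanSpace.norm_eq]
  have h1 : (∑ i, ‖(c - y) i‖ ^ 2) ≤ ∑ _i : Fin d, r ^ 2 := by
    refine Finset.sum_le_sum fun i _ => ?_
    have h2 : ‖(c - y) i‖ = |c i - y i| := by
      simp [PiLp.sub_apply, Real.norm_eq_abs]
    rw [h2]
    have := hy i
    nlinarith [abs_nonneg (c i - y i)]
  calc Real.sqrt (∑ i, ‖(c - y) i‖ ^ 2) ≤ Real.sqrt (∑ _i : Fin d, r ^ 2) :=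
        Real.sqrt_le_sqrt h1
    _ = Real.sqrt ((d : ℝ) * r ^ 2) := by rw [Finset.sum_const]; simp [nsmul_eq_mul]
    _ = Real.sqrt d * r := by
        rw [Real.sqrt_mul (by positivity), Real.sqrt_sq hr]

lemma norm_e1 : ‖e1 d‖ = 1 := by
  rw [e1, EuclideanSpace.norm_single]; norm_num

lemma Ck_k_pos {k : ℕ} {y : Rd d} (hy : y ∈ Ck d k) : 1 ≤ k := by
  by_contra h
  push_neg at h
  interval_cases k
  have i : Fin d := ⟨0, Nat.pos_of_ne_zero (Nat.pos_of_ne_zero (NeZero.ne d)).ne'⟩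
  have h0 := hy i
  norm_num at h0
  exact absurd h0 (abs_nonneg _).not_gt


lemma norm_center_sub_le {k : ℕ} {y : Rd d} (hy : y ∈ Ck d k) :
    ‖((2:ℝ)^k • e1 d) - y‖ ≤ Real.sqrt d := by
  have hk := Ck_k_pos hy
  have hk1 : (1:ℝ) ≤ k := by exact_mod_cast hk
  have hr : (0:ℝ) ≤ 1 / (2 * k) := by positivity
  have h := norm_sub_le_of_mem_cube hy hr
  have h2 : Real.sqrt d * (1 / (2 * (k:ℝ))) ≤ Real.sqrt d * 1 := by
    apply mul_le_mul_of_nonneg_left _ (Real.sqrt_nonneg _)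
    rw [div_le_one (by positivity)]
    linarith
  calc ‖((2:ℝ)^k • e1 d) - y‖ ≤ Real.sqrt d * (1 / (2 * (k:ℝ))) := h
    _ ≤ Real.sqrt d * 1 := h2
    _ = Real.sqrt d := mul_one _

lemma norm_center : ‖(2:ℝ)^k • e1 d‖ = 2^k := by
  rw [norm_smul, norm_e1, mul_one, Real.norm_eq_abs, abs_of_pos (by positivity)]

lemma mem_Ck_norm_lower {k : ℕ} {y : Rd d} (hy : y ∈ Ck d k) :
    (2:ℝ)^k ≤ ‖y‖ + Real.sqrt d := by
  have h := norm_center_sub_le hy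
  have h2 := norm_sub_norm_le ((2:ℝ)^k • e1 d) y
  rw [norm_center] at h2
  linarith

lemma exists_not_mem (y : Rd d) : ∃ N, ∀ k, N ≤ k → y ∉ Ck d k := by
  obtain ⟨N, hN⟩ := pow_unbounded_of_one_lt (R := ℝ) (‖y‖ + Real.sqrt d) one_lt_two
  refine ⟨N, fun k hk hy => ?_⟩
  have h1 := mem_Ck_norm_lower hy
  have h2 : (2:ℝ)^N ≤ 2^k := pow_le_pow_right₀ one_le_two hk
  linarith


lemma rd_nontrivial : Nontrivial (Rd d) := by
  refine ⟨e1 d, 0, fun h => ?_⟩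
  have h1 : ‖e1 d‖ = 1 := norm_e1
  rw [h, norm_zero] at h1
  norm_num at h1

lemma lintegral_ball_rpow (hd : 3 ≤ d) (x : Rd d) {ρ : ℝ} (hρ : 0 < ρ) :
    ∫⁻ y in Metric.ball x ρ, ENNReal.ofReal (‖x - y‖ ^ ((2:ℝ) - d)) ≤
      CdB d * ENNReal.ofReal (ρ^2) := by
  classical
  haveI := rd_nontrivial (d := d)
  have hd3 : (3:ℝ) ≤ d := by exact_mod_cast hd
  set s : ℝ := (2:ℝ) - d with hs_def
  have hs_neg : s ≤ 0 := by rw [hs_def]; linarith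
  have hs_ne : s ≠ 0 := by rw [hs_def]; intro h; linarith
  set g : Rd d → ℝ≥0∞ := fun y => ENNReal.ofReal (‖x - y‖ ^ s) with hg_def
  set A : ℕ → Set (Rd d) :=
    fun j => Metric.ball x (ρ * (2⁻¹:ℝ)^j) \ Metric.ball x (ρ * (2⁻¹:ℝ)^(j+1)) with hA_def
  have hcover : Metric.ball x ρ ⊆ {x} ∪ ⋃ j, A j := by
    intro y hy
    rcases eq_or_ne y x with h | h
    · left; simp [h]
    · right
      have hd0 : 0 < dist y x := dist_pos.mpr h
      have hdρ : dist y x < ρ := Metric.mem_ball.mp hy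
      have hex : ∃ n, ρ * (2⁻¹:ℝ)^n ≤ dist y x := by
        obtain ⟨n, hn⟩ := exists_pow_lt_of_lt_one (div_pos hd0 hρ) (by norm_num : (2⁻¹:ℝ) < 1)
        refine ⟨n, le_of_lt ?_⟩
        rw [mul_comm]
        exact (lt_div_iff₀ hρ).mp hn
      have hn_le : ρ * (2⁻¹:ℝ)^(Nat.find hex) ≤ dist y x := Nat.find_spec hex
      have hn_pos : Nat.find hex ≠ 0 := by
        intro h0
        rw [h0, pow_zero, mul_one] at hn_le
        linarith
      obtain ⟨j, hj_eq⟩ : ∃ j, Nat.find hex = j + 1 :=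
        ⟨Nat.find hex - 1, (Nat.succ_pred_eq_of_pos (Nat.pos_of_ne_zero hn_pos)).symm⟩
      have hj : ¬ (ρ * (2⁻¹:ℝ)^j ≤ dist y x) := by
        have := Nat.find_min hex (m := j) (by omega)
        exact this
      rw [hj_eq] at hn_le
      refine Set.mem_iUnion.mpr ⟨j, Metric.mem_ball.mpr (not_le.mp hj), fun hmem => ?_⟩
      exact absurd (Metric.mem_ball.mp hmem) (not_lt.mpr hn_le)
  have hsingleton : ∫⁻ y in {x}, g y ∂volume = 0 := by
    rw [lintegral_singleton]
    have : g x = 0 := by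
      rw [hg_def]
      simp only [sub_self, norm_zero]
      rw [Real.zero_rpow hs_ne, ENNReal.ofReal_zero]
    rw [this, zero_mul]
  have hAj : ∀ j : ℕ, ∫⁻ y in A j, g y ∂volume ≤
      ENNReal.ofReal ((2:ℝ)^d * ρ^2 * (2⁻¹:ℝ)^j) * volume (Metric.ball (0 : Rd d) 1) := by
    intro j
    set r1 : ℝ := ρ * (2⁻¹:ℝ)^(j+1) with hr1_def
    have hr1 : 0 < r1 := by positivity
    have hr2pos : (0:ℝ) < ρ * (2⁻¹:ℝ)^j := by positivity
    have hb : ∀ y ∈ A j, g y ≤ ENNReal.ofReal (r1 ^ s) := by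
      intro y hy
      apply ENNReal.ofReal_le_ofReal
      apply Real.rpow_le_rpow_of_nonpos hr1 _ hs_neg
      have h1 : ¬ dist y x < r1 := fun hc => hy.2 (Metric.mem_ball.mpr hc)
      rw [dist_eq_norm] at h1
      calc r1 ≤ ‖y - x‖ := not_lt.mp h1
        _ = ‖x - y‖ := norm_sub_rev _ _
    have hvol : volume (A j) ≤ volume (Metric.ball x (ρ * (2⁻¹:ℝ)^j)) :=
      measure_mono Set.diff_subset
    have hballvol : volume (Metric.ball x (ρ * (2⁻¹:ℝ)^j)) =
        ENNReal.ofReal ((ρ * (2⁻¹:ℝ)^j) ^ d) * volume (Metric.ball (0 : Rd d) 1) := by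
      have := Measure.addHaar_ball (μ := volume) x hr2pos.le
      rwa [finrank_euclideanSpace_fin] at this
    have hkey : r1 ^ s * (ρ * (2⁻¹:ℝ)^j) ^ d = (2:ℝ)^d * r1^2 := by
      have hr2eq : ρ * (2⁻¹:ℝ)^j = 2 * r1 := by
        rw [hr1_def, pow_succ]; ring
      rw [hr2eq, mul_pow]
      have h2 : r1 ^ s * r1 ^ (d:ℕ) = r1 ^ (2:ℕ) := by
        rw [← Real.rpow_natCast r1 d, ← Real.rpow_add hr1, ← Real.rpow_natCast r1 2]
        congr 1
        rw [hs_def]; push_cast; ring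
      calc r1^s * ((2:ℝ)^d * r1^d) = (2:ℝ)^d * (r1^s * r1^d) := by ring
        _ = (2:ℝ)^d * r1^2 := by rw [h2]
    have hr1sq : r1^2 ≤ ρ^2 * (2⁻¹:ℝ)^j := by
      rw [hr1_def, mul_pow]
      have : ((2⁻¹:ℝ)^(j+1))^2 ≤ (2⁻¹:ℝ)^j := by
        rw [← pow_mul]
        apply pow_le_pow_of_le_one (by norm_num) (by norm_num)
        omega
      nlinarith [sq_nonneg ρ]
    calc ∫⁻ y in A j, g y ∂volume ≤ ∫⁻ _y in A j, ENNReal.ofReal (r1 ^ s) ∂volume :=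
          setLIntegral_mono measurable_const hb
      _ = ENNReal.ofReal (r1 ^ s) * volume (A j) := setLIntegral_const _ _
      _ ≤ ENNReal.ofReal (r1 ^ s) * volume (Metric.ball x (ρ * (2⁻¹:ℝ)^j)) :=
          mul_le_mul_right hvol _
      _ = ENNReal.ofReal (r1 ^ s * (ρ * (2⁻¹:ℝ)^j) ^ d) * volume (Metric.ball (0 : Rd d) 1) := by
          rw [hballvol, ← mul_assoc, ← ENNReal.ofReal_mul (Real.rpow_nonneg hr1.le _)]
      _ = ENNReal.ofReal ((2:ℝ)^d * r1^2) * volume (Metric.ball (0 : Rd d) 1) := by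
          rw [hkey]
      _ ≤ ENNReal.ofReal ((2:ℝ)^d * ρ^2 * (2⁻¹:ℝ)^j) * volume (Metric.ball (0 : Rd d) 1) := by
          apply mul_le_mul_left
          apply ENNReal.ofReal_le_ofReal
          rw [mul_assoc]
          exact mul_le_mul_of_nonneg_left hr1sq (by positivity)
  have hhalf : ENNReal.ofReal ((2⁻¹:ℝ)) = (2⁻¹ : ℝ≥0∞) := by
    rw [ENNReal.ofReal_inv_of_pos (by norm_num)]
    norm_num
  calc ∫⁻ y in Metric.ball x ρ, g y ∂volume
      ≤ ∫⁻ y in ({x} ∪ ⋃ j, A j), g y ∂volume := lintegral_mono_set hcover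
    _ ≤ (∫⁻ y in {x}, g y ∂volume) + ∫⁻ y in ⋃ j, A j, g y ∂volume := lintegral_union_le _ _ _
    _ ≤ 0 + ∑' j, ∫⁻ y in A j, g y ∂volume := by
        rw [hsingleton]
        exact add_le_add le_rfl (lintegral_iUnion_le _ _)
    _ ≤ ∑' j : ℕ, ENNReal.ofReal ((2:ℝ)^d * ρ^2 * (2⁻¹:ℝ)^j) *
          volume (Metric.ball (0 : Rd d) 1) := by
        rw [zero_add]
        exact ENNReal.tsum_le_tsum hAj
    _ = ∑' j : ℕ, (ENNReal.ofReal ((2:ℝ)^d * ρ^2) * volume (Metric.ball (0 : Rd d) 1))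
          * (2⁻¹ : ℝ≥0∞)^j := by
        refine tsum_congr fun j => ?_
        rw [ENNReal.ofReal_mul (by positivity), ENNReal.ofReal_pow (by norm_num), hhalf]
        ring
    _ = (ENNReal.ofReal ((2:ℝ)^d * ρ^2) * volume (Metric.ball (0 : Rd d) 1))
          * ∑' j : ℕ, (2⁻¹ : ℝ≥0∞)^j := ENNReal.tsum_mul_left
    _ = (ENNReal.ofReal ((2:ℝ)^d * ρ^2) * volume (Metric.ball (0 : Rd d) 1)) * 2 := by
        rw [ENNReal.tsum_geometric, ENNReal.one_sub_inv_two, inv_inv]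
    _ = CdB d * ENNReal.ofReal (ρ^2) := by
        rw [CdB, ENNReal.ofReal_mul (by positivity), ENNReal.ofReal_pow (by norm_num)]
        have : ENNReal.ofReal (2:ℝ) = 2 := by norm_num
        rw [this]
        ring


lemma rpow_helper {a : ℝ} (ha : 0 < a) (d : ℕ) :
    a ^ ((2:ℝ) - d) * a ^ (d:ℕ) = a ^ (2:ℕ) := by
  rw [← Real.rpow_natCast a d, ← Real.rpow_add ha, ← Real.rpow_natCast a 2]
  congr 1
  push_cast; ring

lemma volume_Ck {k : ℕ} (hk : 1 ≤ k) :
    volume (Ck d k) = ENNReal.ofReal ((1/(k:ℝ))^d) := by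
  have hk0 : (0:ℝ) < k := by exact_mod_cast hk
  rw [Ck, volume_cubeSet _ (by positivity)]
  congr 2
  field_simp

lemma J_global (hd : 3 ≤ d) (x : Rd d) {k : ℕ} (hk : 2 ≤ k) :
    ENNReal.ofReal ((k:ℝ)^2) *
      ∫⁻ y in Ck d k, ENNReal.ofReal (‖x - y‖ ^ ((2:ℝ) - d)) ≤ CdB d + 1 := by
  have hd3 : (3:ℝ) ≤ d := by exact_mod_cast hd
  have hk0 : (0:ℝ) < k := by
    have : 0 < k := lt_of_lt_of_le two_pos hk
    exact_mod_cast this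
  have hρ : (0:ℝ) < 1/(k:ℝ) := by positivity
  set g : Rd d → ℝ≥0∞ := fun y => ENNReal.ofReal (‖x - y‖ ^ ((2:ℝ) - d)) with hg_def
  have hsub : Ck d k ⊆ Metric.ball x (1/(k:ℝ)) ∪ (Ck d k \ Metric.ball x (1/(k:ℝ))) := by
    intro y hy
    by_cases h : y ∈ Metric.ball x (1/(k:ℝ))
    · exact Or.inl h
    · exact Or.inr ⟨hy, h⟩
  have hsplit : ∫⁻ y in Ck d k, g y ∂volume ≤
      (∫⁻ y in Metric.ball x (1/(k:ℝ)), g y ∂volume) +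
        ∫⁻ y in Ck d k \ Metric.ball x (1/(k:ℝ)), g y ∂volume :=
    (lintegral_mono_set hsub).trans (lintegral_union_le _ _ _)
  have hfar : ∫⁻ y in Ck d k \ Metric.ball x (1/(k:ℝ)), g y ∂volume ≤
      ENNReal.ofReal ((1/(k:ℝ)) ^ ((2:ℝ) - d)) * ENNReal.ofReal ((1/(k:ℝ))^d) := by
    calc ∫⁻ y in Ck d k \ Metric.ball x (1/(k:ℝ)), g y ∂volume
        ≤ ∫⁻ _y in Ck d k \ Metric.ball x (1/(k:ℝ)),
            ENNReal.ofReal ((1/(k:ℝ)) ^ ((2:ℝ) - d)) ∂volume := by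
          refine setLIntegral_mono measurable_const fun y hy => ?_
          apply ENNReal.ofReal_le_ofReal
          apply Real.rpow_le_rpow_of_nonpos hρ _ (by linarith)
          have h1 : ¬ dist y x < 1/(k:ℝ) := fun hc => hy.2 (Metric.mem_ball.mpr hc)
          rw [dist_eq_norm] at h1
          calc 1/(k:ℝ) ≤ ‖y - x‖ := not_lt.mp h1
            _ = ‖x - y‖ := norm_sub_rev _ _
      _ = ENNReal.ofReal ((1/(k:ℝ)) ^ ((2:ℝ) - d)) *
            volume (Ck d k \ Metric.ball x (1/(k:ℝ))) := setLIntegral_const _ _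
      _ ≤ ENNReal.ofReal ((1/(k:ℝ)) ^ ((2:ℝ) - d)) * volume (Ck d k) :=
          mul_le_mul_right (measure_mono Set.diff_subset) _
      _ = ENNReal.ofReal ((1/(k:ℝ)) ^ ((2:ℝ) - d)) * ENNReal.ofReal ((1/(k:ℝ))^d) := by
          rw [volume_Ck (le_trans one_le_two hk)]
  have hball := lintegral_ball_rpow hd x hρ
  have h1 : (k:ℝ)^2 * ((1/(k:ℝ))^2) = 1 := by field_simp
  have h2 : (k:ℝ)^2 * ((1/(k:ℝ)) ^ ((2:ℝ) - d) * (1/(k:ℝ))^d) = 1 := by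
    rw [rpow_helper hρ d, h1]
  calc ENNReal.ofReal ((k:ℝ)^2) * ∫⁻ y in Ck d k, g y ∂volume
      ≤ ENNReal.ofReal ((k:ℝ)^2) *
          ((CdB d * ENNReal.ofReal ((1/(k:ℝ))^2)) +
            ENNReal.ofReal ((1/(k:ℝ)) ^ ((2:ℝ) - d)) * ENNReal.ofReal ((1/(k:ℝ))^d)) :=
        mul_le_mul_right (hsplit.trans (add_le_add hball hfar)) _
    _ = CdB d * (ENNReal.ofReal ((k:ℝ)^2) * ENNReal.ofReal ((1/(k:ℝ))^2)) +
          ENNReal.ofReal ((k:ℝ)^2) *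
            (ENNReal.ofReal ((1/(k:ℝ)) ^ ((2:ℝ) - d)) * ENNReal.ofReal ((1/(k:ℝ))^d)) := by
        ring
    _ = CdB d + 1 := by
        rw [← ENNReal.ofReal_mul (by positivity), ← ENNReal.ofReal_mul (by positivity),
          ← ENNReal.ofReal_mul (by positivity), h1, h2]
        simp

lemma J_far (hd : 3 ≤ d) (x : Rd d) {k : ℕ} (hk : 2 ≤ k)
    (hfar : ∀ y ∈ Ck d k, (2:ℝ)^k/4 ≤ ‖x - y‖) :
    ENNReal.ofReal ((k:ℝ)^2) *
      ∫⁻ y in Ck d k, ENNReal.ofReal (‖x - y‖ ^ ((2:ℝ) - d)) ≤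
        ENNReal.ofReal (4 * (2⁻¹:ℝ)^k) := by
  have hd3 : (3:ℝ) ≤ d := by exact_mod_cast hd
  have hk0 : (0:ℝ) < k := by
    have : 0 < k := lt_of_lt_of_le two_pos hk
    exact_mod_cast this
  have hk1 : (1:ℝ) ≤ k := by exact_mod_cast le_trans one_le_two hk
  have hbase : (1:ℝ) ≤ 2^k/4 := by
    have h4 : (4:ℝ) ≤ 2^k := by
      calc (4:ℝ) = 2^2 := by norm_num
        _ ≤ 2^k := pow_le_pow_right₀ one_le_two hk
    linarith
  have hbpos : (0:ℝ) < 2^k/4 := by positivity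
  have hI : ∫⁻ y in Ck d k, ENNReal.ofReal (‖x - y‖ ^ ((2:ℝ) - d)) ≤
      ENNReal.ofReal (((2:ℝ)^k/4) ^ ((2:ℝ) - d)) * ENNReal.ofReal ((1/(k:ℝ))^d) := by
    calc ∫⁻ y in Ck d k, ENNReal.ofReal (‖x - y‖ ^ ((2:ℝ) - d))
        ≤ ∫⁻ _y in Ck d k, ENNReal.ofReal (((2:ℝ)^k/4) ^ ((2:ℝ) - d)) ∂volume := by
          refine setLIntegral_mono measurable_const fun y hy => ?_
          exact ENNReal.ofReal_le_ofReal
            (Real.rpow_le_rpow_of_nonpos hbpos (hfar y hy) (by linarith))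
      _ = ENNReal.ofReal (((2:ℝ)^k/4) ^ ((2:ℝ) - d)) * volume (Ck d k) :=
          setLIntegral_const _ _
      _ = _ := by rw [volume_Ck (le_trans one_le_two hk)]
  have hreal : (k:ℝ)^2 * (((2:ℝ)^k/4) ^ ((2:ℝ) - d) * (1/(k:ℝ))^d) ≤ 4 * (2⁻¹:ℝ)^k := by
    have hA : ((2:ℝ)^k/4) ^ ((2:ℝ) - d) ≤ ((2:ℝ)^k/4) ^ (-1:ℝ) :=
      Real.rpow_le_rpow_of_exponent_le hbase (by linarith)
    have hB : ((2:ℝ)^k/4) ^ (-1:ℝ) = 4 * (2⁻¹:ℝ)^k := by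
      rw [Real.rpow_neg_one, inv_div, div_eq_mul_inv, ← inv_pow]
    have hC : (k:ℝ)^2 * (1/(k:ℝ))^d ≤ 1 := by
      have hkd : (k:ℝ)^2 ≤ (k:ℝ)^d := pow_le_pow_right₀ hk1 (by omega)
      rw [one_div, inv_pow]
      rw [mul_inv_le_iff₀ (by positivity), one_mul]
      exact hkd
    calc (k:ℝ)^2 * (((2:ℝ)^k/4) ^ ((2:ℝ) - d) * (1/(k:ℝ))^d)
        = ((k:ℝ)^2 * (1/(k:ℝ))^d) * ((2:ℝ)^k/4) ^ ((2:ℝ) - d) := by ring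
      _ ≤ 1 * ((2:ℝ)^k/4) ^ (-1:ℝ) := by
          apply mul_le_mul hC hA (Real.rpow_nonneg (by positivity) _) one_pos.le
      _ = 4 * (2⁻¹:ℝ)^k := by rw [one_mul, hB]
  calc ENNReal.ofReal ((k:ℝ)^2) * ∫⁻ y in Ck d k, ENNReal.ofReal (‖x - y‖ ^ ((2:ℝ) - d))
      ≤ ENNReal.ofReal ((k:ℝ)^2) *
          (ENNReal.ofReal (((2:ℝ)^k/4) ^ ((2:ℝ) - d)) * ENNReal.ofReal ((1/(k:ℝ))^d)) :=
        mul_le_mul_right hI _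
    _ = ENNReal.ofReal ((k:ℝ)^2 * (((2:ℝ)^k/4) ^ ((2:ℝ) - d) * (1/(k:ℝ))^d)) := by
        rw [← ENNReal.ofReal_mul (by positivity), ← ENNReal.ofReal_mul (by positivity)]
    _ ≤ ENNReal.ofReal (4 * (2⁻¹:ℝ)^k) := ENNReal.ofReal_le_ofReal hreal


lemma measurableSet_Ck (k : ℕ) : MeasurableSet (Ck d k) := measurableSet_cubeSet _ _

lemma lintegral_expand (x : Rd d) :
    ∫⁻ y, ENNReal.ofReal (potV d y * ‖x - y‖ ^ ((2:ℝ) - d)) =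
      ∑' k : ℕ, if 2 ≤ k then
          ENNReal.ofReal ((k:ℝ)^2) *
            ∫⁻ y in Ck d k, ENNReal.ofReal (‖x - y‖ ^ ((2:ℝ) - d))
        else 0 := by
  classical
  have hmeas : Measurable fun y : Rd d => ENNReal.ofReal (‖x - y‖ ^ ((2:ℝ) - d)) :=
    (((measurable_const.sub measurable_id).norm).pow measurable_const).ennreal_ofReal
  have hpt : ∀ y, ENNReal.ofReal (potV d y * ‖x - y‖ ^ ((2:ℝ) - d)) =
      ∑' k : ℕ, (if 2 ≤ k then
          ENNReal.ofReal ((k:ℝ)^2) *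
            (Ck d k).indicator (fun y' => ENNReal.ofReal (‖x - y'‖ ^ ((2:ℝ) - d))) y
        else 0) := by
    intro y
    set t : ℝ := ‖x - y‖ ^ ((2:ℝ) - d) with ht_def
    have ht : 0 ≤ t := Real.rpow_nonneg (norm_nonneg _) _
    obtain ⟨N, hN⟩ := exists_not_mem y
    have hsupp : Function.support
        (fun k : ℕ => (if 2 ≤ k then ((k:ℝ)^2) * (Ck d k).indicator (fun _ => (1:ℝ)) y else 0) * t)
        ⊆ ↑(Finset.range N) := by
      intro k hk
      simp only [Function.mem_support] at hk
      by_contra hmem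
      simp only [Finset.coe_range, Set.mem_Iio, not_lt] at hmem
      have hnm : y ∉ Ck d k := hN k hmem
      rw [Set.indicator_of_notMem hnm] at hk
      simp at hk
    have hsummable : Summable
        (fun k : ℕ => (if 2 ≤ k then ((k:ℝ)^2) * (Ck d k).indicator (fun _ => (1:ℝ)) y else 0) * t) :=
      summable_of_finite_support ((Finset.range N).finite_toSet.subset hsupp)
    have hnn : ∀ k : ℕ, 0 ≤
        (if 2 ≤ k then ((k:ℝ)^2) * (Ck d k).indicator (fun _ => (1:ℝ)) y else 0) * t := by
      intro k
      apply mul_nonneg _ ht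
      split
      · exact mul_nonneg (sq_nonneg _) (Set.indicator_nonneg (fun _ _ => one_pos.le) _)
      · exact le_rfl
    rw [potV, ← tsum_mul_right, ENNReal.ofReal_tsum_of_nonneg hnn hsummable]
    refine tsum_congr fun k => ?_
    by_cases h2 : 2 ≤ k
    · simp only [if_pos h2]
      by_cases hm : y ∈ Ck d k
      · rw [Set.indicator_of_mem hm, Set.indicator_of_mem hm, mul_one,
          ENNReal.ofReal_mul (sq_nonneg _)]
      · rw [Set.indicator_of_notMem hm, Set.indicator_of_notMem hm]
        simp
    · simp [h2]
  rw [lintegral_congr hpt, lintegral_tsum fun k => ?_]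
  · refine tsum_congr fun k => ?_
    by_cases h2 : 2 ≤ k
    · simp only [if_pos h2]
      rw [lintegral_const_mul' _ _ ENNReal.ofReal_ne_top,
        lintegral_indicator (measurableSet_Ck k)]
    · simp [h2]
  · by_cases h2 : 2 ≤ k
    · simp only [if_pos h2]
      exact ((hmeas.indicator (measurableSet_Ck k)).const_mul _).aemeasurable
    · simp only [if_neg h2]
      exact aemeasurable_const


lemma pair_near (hd : 3 ≤ d) {x : Rd d} {k k' : ℕ} (hk : 2 ≤ k) (hkk : k < k')
    (h1 : ∃ y ∈ Ck d k, ‖x - y‖ < 2^k/4) (h2 : ∃ y ∈ Ck d k', ‖x - y‖ < 2^k'/4) :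
    (2:ℝ)^k' < 16 * Real.sqrt d := by
  obtain ⟨y, hy, hxy⟩ := h1
  obtain ⟨y', hy', hxy'⟩ := h2
  have ha : ‖x - (2:ℝ)^k • e1 d‖ < 2^k/4 + Real.sqrt d := by
    have h3 := norm_center_sub_le hy
    have h4 : x - (2:ℝ)^k • e1 d = (x - y) + (y - (2:ℝ)^k • e1 d) := by abel
    have h5 : ‖y - (2:ℝ)^k • e1 d‖ = ‖((2:ℝ)^k • e1 d) - y‖ := norm_sub_rev _ _
    calc ‖x - (2:ℝ)^k • e1 d‖ ≤ ‖x - y‖ + ‖y - (2:ℝ)^k • e1 d‖ := by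
          rw [h4]; exact norm_add_le _ _
      _ < 2^k/4 + Real.sqrt d := by rw [h5]; exact add_lt_add_of_lt_of_le hxy h3
  have ha' : ‖x - (2:ℝ)^k' • e1 d‖ < 2^k'/4 + Real.sqrt d := by
    have h3 := norm_center_sub_le hy'
    have h4 : x - (2:ℝ)^k' • e1 d = (x - y') + (y' - (2:ℝ)^k' • e1 d) := by abel
    have h5 : ‖y' - (2:ℝ)^k' • e1 d‖ = ‖((2:ℝ)^k' • e1 d) - y'‖ := norm_sub_rev _ _
    calc ‖x - (2:ℝ)^k' • e1 d‖ ≤ ‖x - y'‖ + ‖y' - (2:ℝ)^k' • e1 d‖ := by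
          rw [h4]; exact norm_add_le _ _
      _ < 2^k'/4 + Real.sqrt d := by rw [h5]; exact add_lt_add_of_lt_of_le hxy' h3
  have hsep : (2:ℝ)^k' - 2^k ≤ ‖x - (2:ℝ)^k • e1 d‖ + ‖x - (2:ℝ)^k' • e1 d‖ := by
    have hnorm : ‖((2:ℝ)^k' • e1 d) - ((2:ℝ)^k • e1 d)‖ = 2^k' - 2^k := by
      rw [← sub_smul, norm_smul, norm_e1, mul_one, Real.norm_eq_abs,
        abs_of_nonneg (sub_nonneg.mpr (pow_le_pow_right₀ one_le_two hkk.le))]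
    have heq : ((2:ℝ)^k' • e1 d) - ((2:ℝ)^k • e1 d) =
        (x - (2:ℝ)^k • e1 d) - (x - (2:ℝ)^k' • e1 d) := by abel
    calc (2:ℝ)^k' - 2^k = ‖((2:ℝ)^k' • e1 d) - ((2:ℝ)^k • e1 d)‖ := hnorm.symm
      _ = ‖(x - (2:ℝ)^k • e1 d) - (x - (2:ℝ)^k' • e1 d)‖ := by rw [heq]
      _ ≤ ‖x - (2:ℝ)^k • e1 d‖ + ‖x - (2:ℝ)^k' • e1 d‖ := norm_sub_le _ _
  have h2k : 2 * (2:ℝ)^k ≤ 2^k' := by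
    have : (2:ℝ)^(k+1) ≤ 2^k' := pow_le_pow_right₀ one_le_two hkk
    rw [pow_succ] at this
    linarith
  linarith

lemma near_finset (hd : 3 ≤ d) (x : Rd d) :
    ∃ s : Finset ℕ, s.card ≤ d + 5 ∧
      ∀ k, 2 ≤ k → (∃ y ∈ Ck d k, ‖x - y‖ < 2^k/4) → k ∈ (↑s : Set ℕ) := by
  classical
  have hd3 : (3:ℝ) ≤ d := by exact_mod_cast hd
  have hK : 16 * Real.sqrt d ≤ (2:ℝ)^(d+4) := by
    have h1 : Real.sqrt d ≤ d := by
      have := Real.sqrt_le_sqrt (by nlinarith : (d:ℝ) ≤ (d:ℝ)^2)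
      rwa [Real.sqrt_sq (by linarith)] at this
    have h2 : (d:ℝ) ≤ 2^d := by exact_mod_cast (Nat.lt_two_pow_self (n := d)).le
    have h3 : (2:ℝ)^(d+4) = 16 * 2^d := by rw [pow_add]; ring
    rw [h3]
    have : 16 * Real.sqrt d ≤ 16 * (d:ℝ) := by linarith
    nlinarith
  by_cases hex : ∃ m, 2 ≤ m ∧ d + 4 ≤ m ∧ ∃ y ∈ Ck d m, ‖x - y‖ < 2^m/4
  · obtain ⟨m, hm2, hmK, hmnear⟩ := hex
    refine ⟨insert m (Finset.range (d+4)), ?_, ?_⟩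
    · calc (insert m (Finset.range (d+4))).card ≤ (Finset.range (d+4)).card + 1 :=
          Finset.card_insert_le _ _
        _ = d + 5 := by rw [Finset.card_range]
    · intro k hk2 hknear
      by_cases hkK : k < d + 4
      · simp [Finset.mem_insert, Finset.mem_range, hkK]
      · push_neg at hkK
        have hkm : k = m := by
          rcases lt_trichotomy k m with h | h | h
          · exfalso
            have hp := pair_near hd hk2 h hknear hmnear
            have hge : (2:ℝ)^(d+4) ≤ 2^m := pow_le_pow_right₀ one_le_two hmK
            linarith
          · exact h
          · exfalso
            have hp := pair_near hd hm2 h hmnear hknear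
            have hge : (2:ℝ)^(d+4) ≤ 2^k := pow_le_pow_right₀ one_le_two hkK
            linarith
        simp [hkm]
  · refine ⟨Finset.range (d+4), by simp, ?_⟩
    intro k hk2 hknear
    simp only [Finset.coe_range, Set.mem_Iio]
    by_contra h
    push_neg at h
    exact hex ⟨k, hk2, h, hknear⟩

end Aux

theorem statement0 (d : ℕ) [NeZero d] (hd : 3 ≤ d) :
    ∃ M : ℝ≥0∞, M ≠ ⊤ ∧ ∀ x : Rd d,
      (∫⁻ y, ENNReal.ofReal (potV d y * ‖x - y‖ ^ ((2 : ℝ) - (d : ℝ))) ∂volume) ≤ M := by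
  classical
  refine ⟨((d : ℝ≥0∞) + 5) * (CdB d + 1) + 8, ?_, ?_⟩
  · have hv : volume (Metric.ball (0 : Rd d) 1) ≠ ⊤ := measure_ball_lt_top.ne
    have hC : CdB d ≠ ⊤ := by
      rw [CdB]
      exact ENNReal.mul_ne_top
        (ENNReal.mul_ne_top hv (ENNReal.pow_ne_top ENNReal.ofNat_ne_top)) ENNReal.ofNat_ne_top
    refine ENNReal.add_ne_top.mpr ⟨ENNReal.mul_ne_top ?_ ?_, by norm_num⟩
    · exact ENNReal.add_ne_top.mpr ⟨ENNReal.natCast_ne_top d, by norm_num⟩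
    · exact ENNReal.add_ne_top.mpr ⟨hC, ENNReal.one_ne_top⟩
  · intro x
    rw [lintegral_expand x]
    obtain ⟨s, hcard, hmem⟩ := near_finset hd x
    have hbound : ∀ k : ℕ,
        (if 2 ≤ k then
            ENNReal.ofReal ((k:ℝ)^2) *
              ∫⁻ y in Ck d k, ENNReal.ofReal (‖x - y‖ ^ ((2:ℝ) - d))
          else 0) ≤
        Set.indicator (↑s : Set ℕ) (fun _ => CdB d + 1) k + ENNReal.ofReal (4 * (2⁻¹:ℝ)^k) := by
      intro k
      by_cases h2 : 2 ≤ k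
      · rw [if_pos h2]
        by_cases hnear : ∃ y ∈ Ck d k, ‖x - y‖ < 2^k/4
        · have hk_s : k ∈ (↑s : Set ℕ) := hmem k h2 hnear
          rw [Set.indicator_of_mem hk_s]
          exact le_trans (J_global hd x h2) le_self_add
        · push_neg at hnear
          exact le_trans (J_far hd x h2 hnear) le_add_self
      · rw [if_neg h2]
        exact zero_le
    have hindsum : (∑' k : ℕ, Set.indicator (↑s : Set ℕ) (fun _ => CdB d + 1) k) ≤
        ((d : ℝ≥0∞) + 5) * (CdB d + 1) := by
      rw [tsum_eq_sum (s := s) (fun k hk => Set.indicator_of_notMem (by exact_mod_cast hk) _)]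
      calc (∑ k ∈ s, Set.indicator (↑s : Set ℕ) (fun _ => CdB d + 1) k)
          ≤ ∑ _k ∈ s, (CdB d + 1) := by
            refine Finset.sum_le_sum fun k _ => ?_
            rw [Set.indicator_apply]
            split <;> simp
        _ = (s.card : ℝ≥0∞) * (CdB d + 1) := by rw [Finset.sum_const, nsmul_eq_mul]
        _ ≤ ((d : ℝ≥0∞) + 5) * (CdB d + 1) := by
            apply mul_le_mul_left
            calc (s.card : ℝ≥0∞) ≤ ((d + 5 : ℕ) : ℝ≥0∞) := by exact_mod_cast hcard
              _ = (d : ℝ≥0∞) + 5 := by push_cast; ring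
    have hgeosum : (∑' k : ℕ, ENNReal.ofReal (4 * (2⁻¹:ℝ)^k)) ≤ 8 := by
      have hterm : ∀ k : ℕ, ENNReal.ofReal (4 * (2⁻¹:ℝ)^k) = 4 * (2⁻¹ : ℝ≥0∞)^k := by
        intro k
        rw [ENNReal.ofReal_mul (by norm_num), ENNReal.ofReal_pow (by norm_num)]
        congr 1
        · norm_num
        · congr 1
          rw [ENNReal.ofReal_inv_of_pos (by norm_num)]
          norm_num
      rw [tsum_congr hterm, ENNReal.tsum_mul_left, ENNReal.tsum_geometric,
        ENNReal.one_sub_inv_two, inv_inv]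
      norm_num
    calc (∑' k : ℕ, if 2 ≤ k then
            ENNReal.ofReal ((k:ℝ)^2) *
              ∫⁻ y in Ck d k, ENNReal.ofReal (‖x - y‖ ^ ((2:ℝ) - d))
          else 0)
        ≤ ∑' k : ℕ, (Set.indicator (↑s : Set ℕ) (fun _ => CdB d + 1) k +
            ENNReal.ofReal (4 * (2⁻¹:ℝ)^k)) := ENNReal.tsum_le_tsum hbound
      _ = (∑' k : ℕ, Set.indicator (↑s : Set ℕ) (fun _ => CdB d + 1) k) +
            ∑' k : ℕ, ENNReal.ofReal (4 * (2⁻¹:ℝ)^k) := ENNReal.tsum_add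
      _ ≤ ((d : ℝ≥0∞) + 5) * (CdB d + 1) + 8 := add_le_add hindsum hgeosum
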